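/- Fix p ∈ (0,1) and ε > 0, and for each m ≥ 1 set n_m = ⌈(1+ε)(1/p − 1)m⌉. Let A_m be a random m×n_m matrix with i.i.d. Bernoulli(p) entries. Then there is δ > 0 such that for all sufficiently large m, Prob(L(A_m) < m) ≤ e^{−δm}; in particular Prob(L(A_m) = m) → 1 as m → ∞. (Equivalently, in the deterministic regime p > p_c = 1 − x/t of ODB, Prob(h_t(x) = t − x) → 1.) -/

import Mathlib

open MeasureTheory Filter
open scoped Classical Topology

/-- `L(A)`: the maximal length of an increasing path in a 0-1 matrix `A`. -/
noncomputable def pathLen {m n : ℕ} (A : Fin m × Fin n → Bool) : ℕ :=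
  sSup {k | ∃ f : Fin k → Fin m × Fin n,
    (∀ i, A (f i) = true) ∧
    ∀ i j : Fin k, i < j → (f i).1 < (f j).1 ∧ (f i).2 ≤ (f j).2}

/-- The distribution of a random `m × n` 0-1 matrix with i.i.d. Bernoulli(p) entries. -/
noncomputable def bernoulliMatrixMeasure (m n : ℕ) (p : ℝ) (hp1 : p ≤ 1) :
    Measure (Fin m × Fin n → Bool) :=
  Measure.pi fun _ =>
    (PMF.bernoulli (Real.toNNReal p) (Real.toNNReal_le_one.mpr hp1)).toMeasure

instance (m n : ℕ) (p : ℝ) (hp1 : p ≤ 1) : IsProbabilityMeasure (bernoulliMatrixMeasure m n p hp1) := by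
  unfold bernoulliMatrixMeasure
  infer_instance

namespace DetReg

/-- weight of a boolean entry -/
def w (p : ℝ) (b : Bool) : ℝ := if b then p else 1 - p

lemma w_nonneg {p : ℝ} (h0 : 0 ≤ p) (h1 : p ≤ 1) (b : Bool) : 0 ≤ w p b := by
  cases b <;> simp [w] <;> linarith

lemma sum_w (p : ℝ) : (w p true + w p false) = 1 := by simp [w]

/-- success event: a monotone transversal using columns ≥ j -/
def Succ (m n j : ℕ) : Set (Fin m → Fin n → Bool) :=
  {B | ∃ f : Fin m → Fin n, Monotone f ∧ (∀ i, j ≤ (f i : ℕ)) ∧ ∀ i, B i (f i) = true}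

noncomputable def PF (p : ℝ) (m n j : ℕ) : ℝ :=
  ∑ B : Fin m → Fin n → Bool, if B ∈ Succ m n j then 0 else ∏ i, ∏ l, w p (B i l)

lemma row_sum_one (p : ℝ) (n : ℕ) : ∑ r : Fin n → Bool, ∏ l, w p (r l) = 1 := by
  classical
  have := Finset.prod_univ_sum (fun _ : Fin n => (Finset.univ : Finset Bool))
    (fun _ b => w p b)
  rw [Fintype.piFinset_univ] at this
  rw [← this]
  simp [sum_w]

lemma mat_sum_one (p : ℝ) (m n : ℕ) :
    ∑ B : Fin m → Fin n → Bool, ∏ i, ∏ l, w p (B i l) = 1 := by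
  classical
  have := Finset.prod_univ_sum (fun _ : Fin m => (Finset.univ : Finset (Fin n → Bool)))
    (fun _ v => ∏ l, w p (v l))
  rw [Fintype.piFinset_univ] at this
  rw [← this]
  simp [row_sum_one]

lemma PF_nonneg {p : ℝ} (h0 : 0 ≤ p) (h1 : p ≤ 1) (m n j : ℕ) : 0 ≤ PF p m n j := by
  apply Finset.sum_nonneg
  intro B _
  split
  · exact le_refl 0
  · exact Finset.prod_nonneg fun i _ => Finset.prod_nonneg fun l _ => w_nonneg h0 h1 _

lemma PF_zero (p : ℝ) (n j : ℕ) : PF p 0 n j = 0 := by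
  unfold PF
  apply Finset.sum_eq_zero
  intro B _
  have : B ∈ Succ 0 n j := ⟨Fin.elim0, fun i => i.elim0, fun i => i.elim0, fun i => i.elim0⟩
  simp [this]


/-- the first column `≥ j` where row `r` has a `true`, if any -/
noncomputable def fo (n j : ℕ) (r : Fin n → Bool) : Option (Fin n) :=
  if h : (Finset.univ.filter fun k : Fin n => j ≤ (k : ℕ) ∧ r k = true).Nonempty
  then some ((Finset.univ.filter fun k : Fin n => j ≤ (k : ℕ) ∧ r k = true).min' h)
  else none

lemma fo_eq_none_iff {n j : ℕ} {r : Fin n → Bool} :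
    fo n j r = none ↔ ∀ l : Fin n, j ≤ (l : ℕ) → r l = false := by
  unfold fo
  split
  · rename_i h
    simp only [reduceCtorEq, false_iff]
    obtain ⟨k, hk⟩ := h
    simp only [Finset.mem_filter] at hk
    intro hall
    have := hall k hk.2.1
    simp [this] at hk
  · rename_i h
    simp only [true_iff]
    intro l hl
    by_contra hc
    exact h ⟨l, by simp [Finset.mem_filter, hl, show r l = true by revert hc; cases r l <;> simp]⟩

lemma fo_eq_some_iff {n j : ℕ} {r : Fin n → Bool} {k : Fin n} :
    fo n j r = some k ↔
      (j ≤ (k : ℕ) ∧ r k = true ∧ ∀ l : Fin n, j ≤ (l : ℕ) → (l : ℕ) < (k : ℕ) → r l = false) := by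
  unfold fo
  split
  · rename_i h
    simp only [Option.some.injEq]
    constructor
    · rintro rfl
      have hmem := Finset.min'_mem _ h
      simp only [Finset.mem_filter] at hmem
      refine ⟨hmem.2.1, hmem.2.2, fun l hl hlt => ?_⟩
      by_contra hc
      have hlmem : l ∈ (Finset.univ.filter fun k : Fin n => j ≤ (k : ℕ) ∧ r k = true) := by
        simp [Finset.mem_filter, hl, show r l = true by revert hc; cases r l <;> simp]
      have := Finset.min'_le _ _ hlmem
      have : ((Finset.univ.filter fun k : Fin n => j ≤ (k : ℕ) ∧ r k = true).min' h : ℕ) ≤ (l:ℕ) := this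
      omega
    · rintro ⟨hjk, hrk, hmin⟩
      have hkmem : k ∈ (Finset.univ.filter fun k : Fin n => j ≤ (k : ℕ) ∧ r k = true) := by
        simp [Finset.mem_filter, hjk, hrk]
      apply le_antisymm (Finset.min'_le _ _ hkmem)
      have hmem := Finset.min'_mem _ h
      simp only [Finset.mem_filter] at hmem
      by_contra hc
      push_neg at hc
      have := hmin _ hmem.2.1 hc
      simp [this] at hmem
  · rename_i h
    simp only [reduceCtorEq, false_iff]
    rintro ⟨hjk, hrk, -⟩
    exact h ⟨k, by simp [Finset.mem_filter, hjk, hrk]⟩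

/-- indicator of a coordinatewise condition turns a guarded product into a product of guards -/
lemma ind_prod {n : ℕ} (v : Fin n → ℝ) (P : Fin n → Prop) :
    (if ∀ l, P l then ∏ l, v l else 0) = ∏ l, (if P l then v l else 0) := by
  split
  · rename_i h
    exact Finset.prod_congr rfl fun l _ => by simp [h l]
  · rename_i h
    push_neg at h
    obtain ⟨l, hl⟩ := h
    exact (Finset.prod_eq_zero (Finset.mem_univ l) (by simp [hl])).symm

/-- marginal: probability that a row has no `true` in columns `≥ j` -/
lemma marg_none (p : ℝ) (n j : ℕ) (hj : j ≤ n) :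
    ∑ r : Fin n → Bool, (if fo n j r = none then ∏ l, w p (r l) else 0) = (1 - p) ^ (n - j) := by
  classical
  have step : ∀ r : Fin n → Bool,
      (if fo n j r = none then ∏ l, w p (r l) else 0)
        = ∏ l : Fin n, (if (j ≤ (l:ℕ) → r l = false) then w p (r l) else 0) := by
    intro r
    simp only [fo_eq_none_iff]
    by_cases h : ∀ l : Fin n, j ≤ (l:ℕ) → r l = false
    · rw [if_pos h]
      exact Finset.prod_congr rfl fun l _ => (if_pos (h l)).symm
    · rw [if_neg h]
      push_neg at h
      obtain ⟨l, hl1, hl2⟩ := h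
      refine (Finset.prod_eq_zero (Finset.mem_univ l) ?_).symm
      exact if_neg (fun hcond => hl2 (hcond hl1))
  simp only [step]
  have := Finset.prod_univ_sum (fun _ : Fin n => (Finset.univ : Finset Bool))
    (fun l b => if (j ≤ (l:ℕ) → b = false) then w p b else 0)
  rw [Fintype.piFinset_univ] at this
  rw [← this]
  have factor : ∀ l : Fin n, (∑ b : Bool, if (j ≤ (l:ℕ) → b = false) then w p b else 0)
      = if j ≤ (l:ℕ) then (1-p) else 1 := by
    intro l
    by_cases h : j ≤ (l:ℕ) <;> simp [h, w]
  simp only [factor]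
  rw [Fin.prod_univ_eq_prod_range (fun l => if j ≤ l then (1-p) else 1) n]
  rw [Finset.range_eq_Ico, ← Finset.prod_Ico_consecutive _ (Nat.zero_le j) hj]
  rw [Finset.prod_eq_one (fun i hi => by
    simp only [Finset.mem_Ico] at hi
    exact if_neg (by omega))]
  rw [Finset.prod_congr rfl (fun i hi => if_pos (Finset.mem_Ico.mp hi).1)]
  rw [Finset.prod_const, Nat.card_Ico, one_mul]


lemma prod_range_step (p : ℝ) {n j k : ℕ} (hjk : j ≤ k) (hkn : k < n) :
    (∏ x ∈ Finset.range n, (if x = k then p else if j ≤ x ∧ x < k then 1 - p else 1))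
      = (1 - p) ^ (k - j) * p := by
  set f : ℕ → ℝ := fun x => if x = k then p else if j ≤ x ∧ x < k then 1 - p else 1 with hf
  have e1 : (∏ x ∈ Finset.Ico 0 j, f x) = 1 := by
    apply Finset.prod_eq_one
    intro i hi
    simp only [Finset.mem_Ico] at hi
    have h1 : ¬ i = k := by omega
    have h2 : ¬(j ≤ i ∧ i < k) := by omega
    simp [hf, h1, h2]
  have e2 : (∏ x ∈ Finset.Ico j k, f x) = (1 - p) ^ (k - j) := by
    calc (∏ x ∈ Finset.Ico j k, f x) = ∏ _x ∈ Finset.Ico j k, (1 - p) :=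
          Finset.prod_congr rfl (fun i hi => by
            simp only [Finset.mem_Ico] at hi
            have h1 : ¬ i = k := by omega
            have h2 : j ≤ i ∧ i < k := by omega
            simp [hf, h1, h2])
      _ = (1 - p) ^ (k - j) := by rw [Finset.prod_const, Nat.card_Ico]
  have e3 : (∏ x ∈ Finset.Ico (k+1) n, f x) = 1 := by
    apply Finset.prod_eq_one
    intro i hi
    simp only [Finset.mem_Ico] at hi
    have h1 : ¬ i = k := by omega
    have h2 : ¬(j ≤ i ∧ i < k) := by omega
    simp [hf, h1, h2]
  have e4 : f k = p := by simp [hf]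
  rw [Finset.range_eq_Ico,
      ← Finset.prod_Ico_consecutive f (Nat.zero_le j) (le_of_lt (lt_of_le_of_lt hjk hkn)),
      ← Finset.prod_Ico_consecutive f hjk hkn.le,
      Finset.prod_eq_prod_Ico_succ_bot hkn f, e1, e2, e3, e4]
  ring

lemma marg_some (p : ℝ) (n j : ℕ) (k : Fin n) :
    ∑ r : Fin n → Bool, (if fo n j r = some k then ∏ l, w p (r l) else 0)
      = if j ≤ (k:ℕ) then (1 - p) ^ ((k:ℕ) - j) * p else 0 := by
  classical
  by_cases hjk : j ≤ (k:ℕ)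
  · rw [if_pos hjk]
    have step : ∀ r : Fin n → Bool,
        (if fo n j r = some k then ∏ l, w p (r l) else 0)
          = ∏ l : Fin n, (if ((l = k → r l = true) ∧ (j ≤ (l:ℕ) → (l:ℕ) < (k:ℕ) → r l = false))
              then w p (r l) else 0) := by
      intro r
      have hiff : fo n j r = some k ↔
          ∀ l : Fin n, ((l = k → r l = true) ∧ (j ≤ (l:ℕ) → (l:ℕ) < (k:ℕ) → r l = false)) := by
        rw [fo_eq_some_iff]
        constructor
        · rintro ⟨h1, h2, h3⟩ l
          exact ⟨fun hl => hl ▸ h2, h3 l⟩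
        · intro h
          exact ⟨hjk, (h k).1 rfl, fun l hl hlt => (h l).2 hl hlt⟩
      by_cases h : ∀ l : Fin n, ((l = k → r l = true) ∧ (j ≤ (l:ℕ) → (l:ℕ) < (k:ℕ) → r l = false))
      · rw [if_pos (hiff.mpr h)]
        exact Finset.prod_congr rfl fun l _ => (if_pos (h l)).symm
      · rw [if_neg (fun hc => h (hiff.mp hc))]
        push_neg at h
        obtain ⟨l, hl⟩ := h
        refine (Finset.prod_eq_zero (Finset.mem_univ l) ?_).symm
        exact if_neg (by tauto)
    simp only [step]
    have key := Finset.prod_univ_sum (fun _ : Fin n => (Finset.univ : Finset Bool))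
      (fun l b => if ((l = k → b = true) ∧ (j ≤ (l:ℕ) → (l:ℕ) < (k:ℕ) → b = false))
          then w p b else 0)
    rw [Fintype.piFinset_univ] at key
    rw [← key]
    have factor : ∀ l : Fin n,
        (∑ b : Bool, if ((l = k → b = true) ∧ (j ≤ (l:ℕ) → (l:ℕ) < (k:ℕ) → b = false))
            then w p b else 0)
        = if (l:ℕ) = (k:ℕ) then p else if j ≤ (l:ℕ) ∧ (l:ℕ) < (k:ℕ) then 1 - p else 1 := by
      intro l
      rw [Fintype.sum_bool]
      by_cases hlk : l = k
      · subst hlk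
        rw [if_pos rfl, if_pos ⟨fun _ => rfl, fun _ h => absurd h (lt_irrefl _)⟩,
            if_neg (fun hc => by simpa using hc.1 rfl)]
        simp [w]
      · have hvk : ¬((l:ℕ) = (k:ℕ)) := fun hc => hlk (Fin.ext hc)
        rw [if_neg hvk]
        by_cases hmid : j ≤ (l:ℕ) ∧ (l:ℕ) < (k:ℕ)
        · rw [if_pos hmid, if_neg (fun hc => by simpa using hc.2 hmid.1 hmid.2),
              if_pos ⟨fun h => absurd h hlk, fun _ _ => rfl⟩]
          simp [w]
        · rw [if_neg hmid, if_pos ⟨fun h => absurd h hlk, fun h1 h2 => absurd ⟨h1,h2⟩ hmid⟩,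
              if_pos ⟨fun h => absurd h hlk, fun h1 h2 => absurd ⟨h1,h2⟩ hmid⟩]
          simp [w]
    simp only [factor]
    rw [Fin.prod_univ_eq_prod_range
      (fun x => if x = (k:ℕ) then p else if j ≤ x ∧ x < (k:ℕ) then 1 - p else 1) n]
    exact prod_range_step p hjk k.isLt
  · rw [if_neg hjk]
    apply Finset.sum_eq_zero
    intro r _
    rw [if_neg (fun hc => hjk (fo_eq_some_iff.mp hc).1)]


lemma monotone_cons {m n : ℕ} (k : Fin n) (f : Fin m → Fin n) (hf : Monotone f)
    (hk : ∀ i, k ≤ f i) : Monotone (Fin.cons (α := fun _ => Fin n) k f) := by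
  intro a b hab
  induction a using Fin.cases with
  | zero =>
    induction b using Fin.cases with
    | zero => exact le_refl _
    | succ b => simpa using hk b
  | succ a =>
    induction b using Fin.cases with
    | zero => exact absurd (lt_of_lt_of_le (Fin.succ_pos a) hab) (lt_irrefl _)
    | succ b =>
      simpa using hf (Fin.succ_le_succ_iff.mp hab)

lemma cons_mem_iff {m n : ℕ} (j : ℕ) (r : Fin n → Bool) (B : Fin m → Fin n → Bool) :
    (Fin.cons (α := fun _ => Fin n → Bool) r B ∈ Succ (m+1) n j) ↔
      ∃ k : Fin n, fo n j r = some k ∧ B ∈ Succ m n (k : ℕ) := by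
  constructor
  · rintro ⟨f, hmono, hj, hval⟩
    have hr0 : r (f 0) = true := by simpa using hval 0
    have hne : (Finset.univ.filter fun k : Fin n => j ≤ (k : ℕ) ∧ r k = true).Nonempty :=
      ⟨f 0, by simp [Finset.mem_filter, hj 0, hr0]⟩
    set k := (Finset.univ.filter fun k : Fin n => j ≤ (k : ℕ) ∧ r k = true).min' hne with hk
    have hfo : fo n j r = some k := by
      unfold fo
      rw [dif_pos hne]
    have hkmem := Finset.min'_mem _ hne
    simp only [Finset.mem_filter] at hkmem
    refine ⟨k, hfo, f ∘ Fin.succ, hmono.comp (Fin.strictMono_succ.monotone), ?_, ?_⟩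
    · intro i
      have h1 : k ≤ f 0 := Finset.min'_le _ _ (by simp [Finset.mem_filter, hj 0, hr0])
      have h2 : f 0 ≤ f i.succ := hmono (Fin.zero_le _)
      exact le_trans h1 (le_trans h2 (le_refl _))
    · intro i
      simpa using hval i.succ
  · rintro ⟨k, hfo, f, hmono, hk, hval⟩
    obtain ⟨hjk, hrk, -⟩ := fo_eq_some_iff.mp hfo
    have hkle : ∀ i, k ≤ f i := fun i => by
      have := hk i
      exact Fin.le_def.mpr (by omega)
    refine ⟨Fin.cons (α := fun _ => Fin n) k f, monotone_cons k f hmono hkle, ?_, ?_⟩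
    · intro i
      induction i using Fin.cases with
      | zero => simpa using hjk
      | succ i =>
        simp only [Fin.cons_succ]
        exact le_trans hjk (hk i)
    · intro i
      induction i using Fin.cases with
      | zero => simpa using hrk
      | succ i => simpa using hval i

lemma PF_rec (p : ℝ) (m n j : ℕ) (hj : j ≤ n) :
    PF p (m+1) n j = (1-p)^(n-j)
      + ∑ k : Fin n, (if j ≤ (k:ℕ) then (1-p)^((k:ℕ)-j) * p else 0) * PF p m n (k:ℕ) := by
  classical
  have hre : PF p (m+1) n j = ∑ x : (Fin n → Bool) × (Fin m → Fin n → Bool),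
      (if Fin.cons (α := fun _ => Fin n → Bool) x.1 x.2 ∈ Succ (m+1) n j then 0
        else ∏ i, ∏ l, w p (Fin.cons (α := fun _ => Fin n → Bool) x.1 x.2 i l)) := by
    unfold PF
    exact (Fintype.sum_equiv (Fin.consEquiv (fun _ : Fin (m+1) => Fin n → Bool)) _ _
      (fun x => rfl)).symm
  rw [hre, Fintype.sum_prod_type]
  have term_eq : ∀ (r : Fin n → Bool) (B : Fin m → Fin n → Bool),
      (if Fin.cons (α := fun _ => Fin n → Bool) r B ∈ Succ (m+1) n j then 0
        else ∏ i, ∏ l, w p (Fin.cons (α := fun _ => Fin n → Bool) r B i l))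
        = (if (∃ k : Fin n, fo n j r = some k ∧ B ∈ Succ m n (k : ℕ)) then 0
            else (∏ l, w p (r l)) * (∏ i, ∏ l, w p (B i l))) := by
    intro r B
    by_cases h : Fin.cons (α := fun _ => Fin n → Bool) r B ∈ Succ (m+1) n j
    · rw [if_pos h, if_pos ((cons_mem_iff j r B).mp h)]
    · rw [if_neg h, if_neg (fun hc => h ((cons_mem_iff j r B).mpr hc))]
      rw [Fin.prod_univ_succ (fun i => ∏ l, w p (Fin.cons (α := fun _ => Fin n → Bool) r B i l))]
      simp [Fin.cons_zero, Fin.cons_succ]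
  simp only [term_eq]
  have inner : ∀ r : Fin n → Bool,
      (∑ B : Fin m → Fin n → Bool,
        if (∃ k : Fin n, fo n j r = some k ∧ B ∈ Succ m n (k : ℕ)) then 0
          else (∏ l, w p (r l)) * (∏ i, ∏ l, w p (B i l)))
      = (∏ l, w p (r l)) * ((fo n j r).elim 1 (fun k => PF p m n (k : ℕ))) := by
    intro r
    cases hfo : fo n j r with
    | none =>
      have hterm : ∀ B : Fin m → Fin n → Bool,
          (if (∃ k : Fin n, (none : Option (Fin n)) = some k ∧ B ∈ Succ m n (k : ℕ)) then 0
            else (∏ l, w p (r l)) * (∏ i, ∏ l, w p (B i l)))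
          = (∏ l, w p (r l)) * (∏ i, ∏ l, w p (B i l)) := by
        intro B
        apply if_neg
        rintro ⟨k, hk, -⟩
        cases hk
      simp only [hterm, Option.elim]
      rw [← Finset.mul_sum, mat_sum_one, mul_one]
    | some k =>
      have hterm : ∀ B : Fin m → Fin n → Bool,
          (if (∃ k' : Fin n, (some k : Option (Fin n)) = some k' ∧ B ∈ Succ m n (k' : ℕ)) then 0
            else (∏ l, w p (r l)) * (∏ i, ∏ l, w p (B i l)))
          = (∏ l, w p (r l)) * (if B ∈ Succ m n (k : ℕ) then 0 else (∏ i, ∏ l, w p (B i l))) := by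
        intro B
        by_cases hB : B ∈ Succ m n (k : ℕ)
        · rw [if_pos ⟨k, rfl, hB⟩, if_pos hB, mul_zero]
        · rw [if_neg, if_neg hB]
          rintro ⟨k', hk', hBk⟩
          rw [Option.some_inj] at hk'
          exact hB (hk' ▸ hBk)
      simp only [hterm, Option.elim]
      rw [← Finset.mul_sum]
      rfl
  have sum_eq : (∑ r : Fin n → Bool, ∑ B : Fin m → Fin n → Bool,
      if (∃ k : Fin n, fo n j r = some k ∧ B ∈ Succ m n (k : ℕ)) then 0
        else (∏ l, w p (r l)) * (∏ i, ∏ l, w p (B i l)))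
      = ∑ r : Fin n → Bool, (∏ l, w p (r l)) * ((fo n j r).elim 1 (fun k => PF p m n (k : ℕ))) :=
    Finset.sum_congr rfl (fun r _ => inner r)
  rw [sum_eq]
  rw [← Finset.sum_fiberwise Finset.univ (fun r : Fin n → Bool => fo n j r)
        (fun r => (∏ l, w p (r l)) * ((fo n j r).elim 1 (fun k => PF p m n (k : ℕ))))]
  rw [Fintype.sum_option]
  congr 1
  · have hcongr : ∀ r ∈ Finset.univ.filter (fun r : Fin n → Bool => fo n j r = none),
        (∏ l, w p (r l)) * ((fo n j r).elim 1 (fun k => PF p m n (k : ℕ))) = ∏ l, w p (r l) := by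
      intro r hr
      rw [Finset.mem_filter] at hr
      rw [hr.2, Option.elim, mul_one]
    rw [Finset.sum_congr rfl hcongr, Finset.sum_filter]
    exact marg_none p n j hj
  · apply Finset.sum_congr rfl
    intro k _
    have hcongr : ∀ r ∈ Finset.univ.filter (fun r : Fin n → Bool => fo n j r = some k),
        (∏ l, w p (r l)) * ((fo n j r).elim 1 (fun k' => PF p m n (k' : ℕ)))
          = (∏ l, w p (r l)) * PF p m n (k : ℕ) := by
      intro r hr
      rw [Finset.mem_filter] at hr
      rw [hr.2, Option.elim]
    rw [Finset.sum_congr rfl hcongr, ← Finset.sum_mul, Finset.sum_filter, marg_some p n j k]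

lemma PF_bound {p t : ℝ} (hp0 : 0 < p) (hp1 : p < 1) (ht : 0 < t)
    (hx : (1 - p) * Real.exp t < 1) :
    ∀ m n j : ℕ, j ≤ n →
      PF p m n j ≤ Real.exp (-t * ((n - j : ℕ) : ℝ)) * (p / (1 - (1 - p) * Real.exp t)) ^ m := by
  intro m
  induction m with
  | zero =>
    intro n j hj
    rw [PF_zero]
    positivity
  | succ m ih =>
    intro n j hj
    set q : ℝ := 1 - p with hqdef
    set x : ℝ := q * Real.exp t with hxdef
    set β : ℝ := p / (1 - x) with hβdef
    have hq0 : 0 ≤ q := by rw [hqdef]; linarith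
    have hx0 : 0 ≤ x := mul_nonneg hq0 (Real.exp_pos t).le
    have h1x : 0 < 1 - x := by linarith
    have hqx : q ≤ x := by
      rw [hxdef]
      nlinarith [Real.one_le_exp ht.le]
    have hβ1 : 1 ≤ β := by
      rw [hβdef, le_div_iff₀ h1x]
      rw [hqdef] at hqx
      linarith
    have hβ0 : 0 < β := lt_of_lt_of_le one_pos hβ1
    have hpβ : p = β * (1 - x) := by
      rw [hβdef]; field_simp
    set s : ℕ := n - j with hsdef
    rw [PF_rec p m n j hj]
    have hsum : (∑ k : Fin n, (if j ≤ (k:ℕ) then q^((k:ℕ)-j) * p else 0) * PF p m n (k:ℕ))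
        ≤ ∑ k : Fin n, (if j ≤ (k:ℕ) then q^((k:ℕ)-j) * p else 0)
            * (Real.exp (-t * ((n - (k:ℕ) : ℕ) : ℝ)) * β ^ m) := by
      apply Finset.sum_le_sum
      intro k _
      have hc : 0 ≤ (if j ≤ (k:ℕ) then q^((k:ℕ)-j) * p else 0) := by
        split
        · positivity
        · exact le_refl 0
      exact mul_le_mul_of_nonneg_left (ih n (k:ℕ) (le_of_lt k.isLt)) hc
    have hterm : ∀ k : Fin n,
        (if j ≤ (k:ℕ) then q^((k:ℕ)-j) * p else 0)
            * (Real.exp (-t * ((n - (k:ℕ) : ℕ) : ℝ)) * β ^ m)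
        = (Real.exp (-t * (s:ℝ)) * β ^ m * p) * (if j ≤ (k:ℕ) then x^((k:ℕ)-j) else 0) := by
      intro k
      by_cases h : j ≤ (k:ℕ)
      · rw [if_pos h, if_pos h]
        have hkn : (k:ℕ) ≤ n := le_of_lt k.isLt
        have hnat : s = (n - (k:ℕ)) + ((k:ℕ) - j) := by omega
        have hcast : (s:ℝ) = ((n - (k:ℕ) : ℕ):ℝ) + (((k:ℕ) - j : ℕ):ℝ) := by
          rw [hnat]; push_cast; ring
        have hxpow : x^((k:ℕ)-j) = q^((k:ℕ)-j) * Real.exp (t * (((k:ℕ)-j : ℕ):ℝ)) := by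
          rw [hxdef, mul_pow]
          congr 1
          rw [mul_comm t, Real.exp_nat_mul]
        rw [hxpow, hcast]
        rw [show -t * (((n - (k:ℕ) : ℕ):ℝ) + (((k:ℕ) - j : ℕ):ℝ))
            = (-t * ((n - (k:ℕ) : ℕ):ℝ)) + (-t * (((k:ℕ) - j : ℕ):ℝ)) by ring]
        rw [Real.exp_add]
        rw [show (-t * (((k:ℕ) - j : ℕ):ℝ)) = -(t * (((k:ℕ) - j : ℕ):ℝ)) by ring, Real.exp_neg]
        have hepos : (0:ℝ) < Real.exp (t * (((k:ℕ) - j : ℕ):ℝ)) := Real.exp_pos _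
        field_simp
      · rw [if_neg h, if_neg h]
        ring
    rw [Finset.sum_congr rfl (fun k _ => hterm k)] at hsum
    rw [← Finset.mul_sum] at hsum
    have hgeo : (∑ k : Fin n, (if j ≤ (k:ℕ) then x^((k:ℕ)-j) else 0))
        = ∑ d ∈ Finset.range s, x^d := by
      rw [Fin.sum_univ_eq_sum_range (fun k => if j ≤ k then x^(k-j) else 0) n]
      rw [Finset.range_eq_Ico, ← Finset.sum_Ico_consecutive _ (Nat.zero_le j) hj]
      rw [Finset.sum_eq_zero (fun i hi => by
        simp only [Finset.mem_Ico] at hi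
        exact if_neg (by omega)), zero_add]
      rw [Finset.sum_Ico_eq_sum_range, ← hsdef]
      apply Finset.sum_congr rfl
      intro i hi
      rw [if_pos (Nat.le_add_right j i)]
      congr 1
      omega
    rw [hgeo] at hsum
    have hxne : x ≠ 1 := by linarith
    rw [geom_sum_eq hxne] at hsum
    have hfact : Real.exp (-t * (s:ℝ)) * β ^ m * p * ((x ^ s - 1) / (x - 1))
        = Real.exp (-t * (s:ℝ)) * β ^ m * (β * (1 - x ^ s)) := by
      rw [hpβ]
      have : x - 1 ≠ 0 := by linarith
      field_simp
      ring
    rw [hfact] at hsum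
    have hqs : q ^ s = Real.exp (-t * (s:ℝ)) * x ^ s := by
      have : q = Real.exp (-t) * x := by
        rw [hxdef, Real.exp_neg]
        have := Real.exp_pos t
        field_simp
      rw [this, mul_pow, ← Real.exp_nat_mul]
      congr 1
      push_cast
      ring
    have hmain : q ^ s + ∑ k : Fin n, (if j ≤ (k:ℕ) then q^((k:ℕ)-j) * p else 0) * PF p m n (k:ℕ)
        ≤ Real.exp (-t * (s:ℝ)) * β ^ (m+1) := by
      have hE : (0:ℝ) < Real.exp (-t * (s:ℝ)) := Real.exp_pos _
      have hxs : 0 ≤ x ^ s := pow_nonneg hx0 s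
      have hB : 1 ≤ β ^ m * β := by
        have hβm : 1 ≤ β ^ m := one_le_pow₀ hβ1
        nlinarith
      calc q ^ s + ∑ k : Fin n, (if j ≤ (k:ℕ) then q^((k:ℕ)-j) * p else 0) * PF p m n (k:ℕ)
          ≤ Real.exp (-t * (s:ℝ)) * x ^ s
            + Real.exp (-t * (s:ℝ)) * β ^ m * (β * (1 - x ^ s)) := by
            rw [← hqs]; linarith [hsum]
        _ ≤ Real.exp (-t * (s:ℝ)) * β ^ (m+1) := by
            rw [pow_succ]
            nlinarith [mul_nonneg hE.le (mul_nonneg hxs (sub_nonneg.mpr hB))]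
    exact hmain

lemma strictMono_fin_le {m : ℕ} {ρ : Fin m → Fin m} (h : StrictMono ρ) :
    ∀ v : ℕ, ∀ i : Fin m, (i : ℕ) = v → v ≤ (ρ i : ℕ) := by
  intro v
  induction v with
  | zero => intro i _; exact Nat.zero_le _
  | succ v ih =>
    intro i hi
    have hvm : v < m := by omega
    have hlt : (⟨v, hvm⟩ : Fin m) < i := by
      rw [Fin.lt_def]; simp only [Fin.val_mk]; omega
    have h1 := ih ⟨v, hvm⟩ rfl
    have h2 := h hlt
    rw [Fin.lt_def] at h2
    omega

lemma strictMono_fin_id {m : ℕ} {ρ : Fin m → Fin m} (h : StrictMono ρ) : ∀ i, ρ i = i := by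
  intro i
  have h1 : (i : ℕ) ≤ (ρ i : ℕ) := strictMono_fin_le h (i : ℕ) i rfl
  have hσ : StrictMono (fun i : Fin m => (ρ i.rev).rev) := by
    intro a b hab
    exact Fin.rev_lt_rev.mpr (h (Fin.rev_lt_rev.mpr hab))
  have h2 : (i.rev : ℕ) ≤ ((ρ i.rev.rev).rev : ℕ) := strictMono_fin_le hσ (i.rev : ℕ) i.rev rfl
  rw [Fin.rev_rev] at h2
  have h2' : i.rev ≤ (ρ i).rev := by rw [Fin.le_def]; exact h2
  have h3 : ρ i ≤ i := Fin.rev_le_rev.mp h2'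
  rw [Fin.le_def] at h3
  exact Fin.ext (le_antisymm h3 h1)

lemma pathLen_bdd {m n : ℕ} (A : Fin m × Fin n → Bool) :
    ∀ k ∈ {k | ∃ f : Fin k → Fin m × Fin n,
      (∀ i, A (f i) = true) ∧
      ∀ i j : Fin k, i < j → (f i).1 < (f j).1 ∧ (f i).2 ≤ (f j).2}, k ≤ m := by
  rintro k ⟨f, hval, hmono⟩
  have hsm : StrictMono (fun i : Fin k => (f i).1) := fun i j hij => (hmono i j hij).1
  have := Fintype.card_le_of_injective _ hsm.injective
  simpa using this

lemma pathLen_zero_mem {m n : ℕ} (A : Fin m × Fin n → Bool) :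
    0 ∈ {k | ∃ f : Fin k → Fin m × Fin n,
      (∀ i, A (f i) = true) ∧
      ∀ i j : Fin k, i < j → (f i).1 < (f j).1 ∧ (f i).2 ≤ (f j).2} :=
  ⟨Fin.elim0, fun i => i.elim0, fun i _ _ => i.elim0⟩

lemma pathLen_le {m n : ℕ} (A : Fin m × Fin n → Bool) : pathLen A ≤ m := by
  exact csSup_le ⟨0, pathLen_zero_mem A⟩ (pathLen_bdd A)

lemma le_pathLen_iff {m n : ℕ} (A : Fin m × Fin n → Bool) :
    m ≤ pathLen A ↔ ∃ g : Fin m → Fin n, Monotone g ∧ ∀ i, A (i, g i) = true := by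
  constructor
  · intro h
    have hmem := Nat.sSup_mem ⟨0, pathLen_zero_mem A⟩ ⟨m, pathLen_bdd A⟩
    obtain ⟨f, hval, hmono⟩ := hmem
    have hcast : ∀ i : Fin m, (Fin.castLE h i : Fin (pathLen A)) = ⟨(i:ℕ), lt_of_lt_of_le i.isLt h⟩ :=
      fun i => rfl
    set f' : Fin m → Fin m × Fin n := fun i => f (Fin.castLE h i) with hf'
    have hmono' : ∀ i j : Fin m, i < j → (f' i).1 < (f' j).1 ∧ (f' i).2 ≤ (f' j).2 := by
      intro i j hij
      exact hmono _ _ (Fin.lt_def.mpr (Fin.lt_def.mp hij))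
    have hrows : StrictMono (fun i : Fin m => (f' i).1) := fun i j hij => (hmono' i j hij).1
    have hid : ∀ i : Fin m, (f' i).1 = i := strictMono_fin_id hrows
    refine ⟨fun i => (f' i).2, ?_, ?_⟩
    · intro i j hij
      rcases lt_or_eq_of_le hij with hlt | rfl
      · exact (hmono' i j hlt).2
      · exact le_refl _
    · intro i
      have hv := hval (Fin.castLE h i)
      have heq : f' i = (i, (f' i).2) := Prod.ext (hid i) rfl
      show A (i, (f' i).2) = true
      rw [← heq]
      exact hv
  · rintro ⟨g, hmono, hval⟩
    apply le_csSup ⟨m, pathLen_bdd A⟩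
    refine ⟨fun i => (i, g i), hval, ?_⟩
    intro i j hij
    exact ⟨hij, hmono (le_of_lt hij)⟩

lemma pathLen_lt_iff {m n : ℕ} (A : Fin m × Fin n → Bool) :
    pathLen A < m ↔ (fun i l => A (i, l)) ∉ Succ m n 0 := by
  rw [← not_le, le_pathLen_iff]
  constructor
  · rintro hne ⟨g, hmono, -, hval⟩
    exact hne ⟨g, hmono, hval⟩
  · rintro hne ⟨g, hmono, hval⟩
    exact hne ⟨g, hmono, fun i => Nat.zero_le _, hval⟩

lemma meas_eq {m n : ℕ} {p : ℝ} (hp0 : 0 ≤ p) (hp1 : p ≤ 1) (S : Set (Fin m × Fin n → Bool)) :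
    ((bernoulliMatrixMeasure m n p hp1) S).toReal
      = ∑ A : Fin m × Fin n → Bool, (if A ∈ S then ∏ y, w p (A y) else 0) := by
  classical
  have hsingle : ∀ A : Fin m × Fin n → Bool,
      (bernoulliMatrixMeasure m n p hp1) {A} = ∏ y : Fin m × Fin n, ENNReal.ofReal (w p (A y)) := by
    intro A
    rw [← Set.univ_pi_singleton A]
    rw [bernoulliMatrixMeasure, MeasureTheory.Measure.pi_pi]
    apply Finset.prod_congr rfl
    intro y _
    rw [PMF.toMeasure_apply_singleton _ _ (measurableSet_singleton _)]
    cases hA : A y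
    · simp only [PMF.bernoulli_apply, cond_false]
      rw [show w p false = 1 - p from rfl]
      rw [ENNReal.ofReal_sub 1 hp0, ENNReal.ofReal_one, ENNReal.coe_sub, ENNReal.coe_one]
      rfl
    · simp only [PMF.bernoulli_apply, cond_true]
      rw [show w p true = p from rfl]
      rfl
  set F : Finset (Fin m × Fin n → Bool) := Finset.univ.filter (· ∈ S) with hF
  have hSF : S = ⋃ A ∈ F, ({A} : Set (Fin m × Fin n → Bool)) := by
    ext a
    simp [hF]
  have hmeas : (bernoulliMatrixMeasure m n p hp1) S = ∑ A ∈ F, (bernoulliMatrixMeasure m n p hp1) {A} := by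
    rw [hSF]
    apply measure_biUnion_finset
    · intro a _ b _ hab
      simp [Function.onFun, Set.disjoint_singleton, hab]
    · intro b _
      exact measurableSet_singleton b
  rw [hmeas, ENNReal.toReal_sum (fun A _ => measure_ne_top _ _)]
  rw [Finset.sum_filter]
  apply Finset.sum_congr rfl
  intro A _
  by_cases hA : A ∈ S
  · rw [if_pos hA, if_pos hA, hsingle A, ENNReal.toReal_prod]
    apply Finset.prod_congr rfl
    intro y _
    exact ENNReal.toReal_ofReal (w_nonneg hp0 hp1 _)
  · rw [if_neg hA, if_neg hA]

lemma prob_fail_eq {m n : ℕ} {p : ℝ} (hp0 : 0 ≤ p) (hp1 : p ≤ 1) :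
    ((bernoulliMatrixMeasure m n p hp1) {A | pathLen A < m}).toReal = PF p m n 0 := by
  rw [meas_eq hp0 hp1]
  simp only [Set.mem_setOf_eq]
  unfold PF
  apply Fintype.sum_equiv (Equiv.curry (Fin m) (Fin n) Bool)
  intro A
  have hmem : (pathLen A < m) ↔ ((Equiv.curry (Fin m) (Fin n) Bool) A ∉ Succ m n 0) :=
    pathLen_lt_iff A
  have hw : (∏ y : Fin m × Fin n, w p (A y)) = ∏ i, ∏ l, w p (((Equiv.curry (Fin m) (Fin n) Bool) A) i l) :=
    Fintype.prod_prod_type _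
  by_cases h : pathLen A < m
  · rw [if_pos h, if_neg (by
      intro hc
      exact (hmem.mp h) hc), hw]
  · rw [if_neg h, if_pos (by
      by_contra hc
      exact h (hmem.mpr hc))]

theorem deterministic_regime {p ε : ℝ} (hp0 : 0 < p) (hp1 : p < 1) (hε : 0 < ε) :
    (∃ δ > (0 : ℝ), ∃ M : ℕ, ∀ m ≥ M,
      ((bernoulliMatrixMeasure m (⌈(1 + ε) * (1 / p - 1) * m⌉₊) p hp1.le)
          {A | pathLen A < m}).toReal ≤ Real.exp (-δ * m)) ∧
    Filter.Tendsto (fun m : ℕ =>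
        ((bernoulliMatrixMeasure m (⌈(1 + ε) * (1 / p - 1) * m⌉₊) p hp1.le)
          {A | pathLen A = m}).toReal)
      Filter.atTop (nhds 1) := by
  classical
  obtain ⟨q, hq⟩ : ∃ q : ℝ, q = 1 - p := ⟨_, rfl⟩
  have hq0 : 0 < q := by rw [hq]; linarith
  obtain ⟨D, hD⟩ : ∃ D : ℝ, D = 2*((1+ε)*q + p) := ⟨_, rfl⟩
  have hD0 : 0 < D := by rw [hD]; nlinarith
  obtain ⟨c, hc⟩ : ∃ c : ℝ, c = ε*p*q/D := ⟨_, rfl⟩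
  have hc0 : 0 < c := by rw [hc]; positivity
  have hcD : c * D = ε*p*q := by rw [hc, div_mul_cancel₀ _ hD0.ne']
  have hcp : c < p/2 := by
    rw [hc, div_lt_iff₀ hD0, hD]
    nlinarith
  obtain ⟨t, ht⟩ : ∃ t : ℝ, t = Real.log (1 + c/q) := ⟨_, rfl⟩
  have hcq0 : 0 < c/q := by positivity
  have ht0 : 0 < t := by rw [ht]; exact Real.log_pos (by linarith)
  have hexp : Real.exp t = 1 + c/q := by rw [ht]; exact Real.exp_log (by linarith)
  have hx : q * Real.exp t = q + c := by
    rw [hexp]; field_simp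
  have hx1 : q * Real.exp t < 1 := by
    rw [hx, hq]; linarith
  have hpc0 : 0 < p - c := by linarith
  have hβ0 : 0 < p/(p-c) := by positivity
  have hβeq : p / (1 - q*Real.exp t) = p/(p - c) := by
    rw [hx]; congr 1; rw [hq]; ring
  have hlogβ : Real.log (p/(p-c)) ≤ c/(p-c) := by
    have h := Real.log_le_sub_one_of_pos hβ0
    have h2 : p/(p-c) - 1 = c/(p-c) := by field_simp; ring
    linarith
  have hqc0 : (0:ℝ) < q + c := by linarith
  have htlow : c/(q+c) ≤ t := by
    have hpos : (0:ℝ) < 1 + c/q := by linarith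
    have h := Real.log_le_sub_one_of_pos (show (0:ℝ) < (1+c/q)⁻¹ by positivity)
    rw [Real.log_inv] at h
    have hinv : (1+c/q)⁻¹ - 1 = -(c/(q+c)) := by
      rw [show (1:ℝ)+c/q = (q+c)/q by field_simp, inv_div]
      rw [div_sub_one hqc0.ne', show q - (q+c) = -c by ring, neg_div]
    rw [ht]
    linarith
  obtain ⟨δ, hδ⟩ : ∃ δ : ℝ, δ = t*((1+ε)*(q/p)) - Real.log (p/(p-c)) := ⟨_, rfl⟩
  have hδ0 : 0 < δ := by
    have hrw : (c/(q+c))*((1+ε)*(q/p)) = (c*((1+ε)*q))/((q+c)*p) := by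
      field_simp
    have hcD2 : c*((1+ε)*q+p) = ε*p*q/2 := by
      have h' : c*D = ε*p*q := hcD
      rw [hD] at h'
      linear_combination h' / 2
    have hXY : c/(p-c) < (c/(q+c))*((1+ε)*(q/p)) := by
      rw [hrw, div_lt_div_iff₀ hpc0 (by positivity : (0:ℝ) < (q+c)*p)]
      have hcore : (q+c)*p < (1+ε)*q*(p-c) := by
        nlinarith [hcD2, mul_pos (mul_pos hε hp0) hq0]
      nlinarith [mul_lt_mul_of_pos_left hcore hc0]
    have ht1 : (c/(q+c))*((1+ε)*(q/p)) ≤ t*((1+ε)*(q/p)) :=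
      mul_le_mul_of_nonneg_right htlow (by positivity)
    rw [hδ]
    linarith
  have hbound : ∀ m : ℕ,
      ((bernoulliMatrixMeasure m (⌈(1 + ε) * (1 / p - 1) * m⌉₊) p hp1.le)
          {A | pathLen A < m}).toReal ≤ Real.exp (-δ * m) := by
    intro m
    obtain ⟨n, hn⟩ : ∃ n : ℕ, n = ⌈(1 + ε) * (1 / p - 1) * m⌉₊ := ⟨_, rfl⟩
    rw [← hn]
    rw [prob_fail_eq hp0.le hp1.le]
    have hb := PF_bound hp0 hp1 ht0 (by rw [← hq]; exact hx1) m n 0 (Nat.zero_le n)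
    rw [← hq, hβeq] at hb
    refine le_trans hb ?_
    rw [Nat.sub_zero]
    have hβexp : (p/(p-c))^m = Real.exp ((m:ℝ) * Real.log (p/(p-c))) := by
      rw [Real.exp_nat_mul, Real.exp_log hβ0]
    rw [hβexp, ← Real.exp_add]
    apply Real.exp_le_exp.mpr
    have h2 : (1/p - 1) = q/p := by rw [hq]; field_simp
    have hnge : (1+ε)*(q/p)*(m:ℝ) ≤ (n:ℝ) := by
      have h1 : (1+ε)*(1/p-1)*(m:ℝ) ≤ (n:ℝ) := by
        rw [hn]; exact_mod_cast Nat.le_ceil ((1 + ε) * (1 / p - 1) * m)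
      rw [h2] at h1
      linarith
    have h3 : t*((1+ε)*(q/p)*(m:ℝ)) ≤ t*(n:ℝ) := mul_le_mul_of_nonneg_left hnge ht0.le
    have h4 : t*((1+ε)*(q/p))*(m:ℝ) ≤ t*(n:ℝ) := by
      calc t*((1+ε)*(q/p))*(m:ℝ) = t*((1+ε)*(q/p)*(m:ℝ)) := by ring
        _ ≤ t*(n:ℝ) := h3
    rw [hδ]
    linarith [h4]
  refine ⟨⟨δ, hδ0, 0, fun m _ => hbound m⟩, ?_⟩
  have hfail0 : Filter.Tendsto (fun m : ℕ =>
      ((bernoulliMatrixMeasure m (⌈(1 + ε) * (1 / p - 1) * m⌉₊) p hp1.le)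
          {A | pathLen A < m}).toReal) Filter.atTop (nhds 0) := by
    apply squeeze_zero (fun m => ENNReal.toReal_nonneg) hbound
    have hcongr : ∀ m : ℕ, Real.exp (-δ * m) = (Real.exp (-δ))^m := by
      intro m
      rw [← Real.exp_nat_mul]
      ring_nf
    simp only [hcongr]
    exact tendsto_pow_atTop_nhds_zero_of_lt_one (Real.exp_pos _).le
      (by rw [Real.exp_lt_one_iff]; linarith)
  have hcompl : ∀ m : ℕ,
      ((bernoulliMatrixMeasure m (⌈(1 + ε) * (1 / p - 1) * m⌉₊) p hp1.le)
          {A | pathLen A = m}).toReal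
      = 1 - ((bernoulliMatrixMeasure m (⌈(1 + ε) * (1 / p - 1) * m⌉₊) p hp1.le)
          {A | pathLen A < m}).toReal := by
    intro m
    obtain ⟨n, hn⟩ : ∃ n : ℕ, n = ⌈(1 + ε) * (1 / p - 1) * m⌉₊ := ⟨_, rfl⟩
    rw [← hn]
    have hset : {A : Fin m × Fin n → Bool | pathLen A = m} = {A | pathLen A < m}ᶜ := by
      ext A
      simp only [Set.mem_setOf_eq, Set.mem_compl_iff, not_lt]
      have := pathLen_le A
      omega
    rw [hset, prob_compl_eq_one_sub (Set.to_countable _).measurableSet]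
    rw [ENNReal.toReal_sub_of_le prob_le_one ENNReal.one_ne_top, ENNReal.toReal_one]
  have := Filter.Tendsto.const_sub (1:ℝ) hfail0
  rw [sub_zero] at this
  exact Filter.Tendsto.congr (fun m => (hcompl m).symm) this

end DetReg

/-- Deterministic regime: with `n_m = ⌈(1+ε)(1/p − 1)m⌉` and `A_m` a random `m × n_m`
matrix with i.i.d. Bernoulli(p) entries, there is `δ > 0` with
`Prob(L(A_m) < m) ≤ e^{−δm}` for all large `m`; in particular `Prob(L(A_m) = m) → 1`. -/
theorem deterministic_regime {p ε : ℝ} (hp0 : 0 < p) (hp1 : p < 1) (hε : 0 < ε) :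
    (∃ δ > (0 : ℝ), ∃ M : ℕ, ∀ m ≥ M,
      ((bernoulliMatrixMeasure m (⌈(1 + ε) * (1 / p - 1) * m⌉₊) p hp1.le)
          {A | pathLen A < m}).toReal ≤ Real.exp (-δ * m)) ∧
    Tendsto (fun m : ℕ =>
        ((bernoulliMatrixMeasure m (⌈(1 + ε) * (1 / p - 1) * m⌉₊) p hp1.le)
          {A | pathLen A = m}).toReal)
      atTop (𝓝 1) := by
  exact DetReg.deterministic_regime hp0 hp1 hε
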